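/- Let a : ℤ → ℂ be not generic, let v ∈ a^⊥ be nonzero with ω(v) minimal among all nonzero elements of a^⊥, and let v' ∈ a^⊥ be nonzero with ω(v') = ω(v). Then v' is a nonzero scalar multiple of some shift v^{(n)} of v. -/

import Mathlib

/-- For `x : ℤ → ℂ` and `n : ℤ`, the shift `x^{(n)}` is `i ↦ x (i + n)`. -/
def shiftFun (a : ℤ → ℂ) (n : ℤ) : ℤ → ℂ := fun i => a (i + n)

/-- The shift of a finitely supported function `v : ℤ →₀ ℂ`:
`(shiftV v n) i = v (i + n)`. -/
noncomputable def shiftV (v : ℤ →₀ ℂ) (n : ℤ) : ℤ →₀ ℂ :=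
  Finsupp.equivMapDomain (Equiv.addRight n).symm v

/-- The shift, as a linear map. -/
noncomputable def shiftVL (n : ℤ) : (ℤ →₀ ℂ) →ₗ[ℂ] (ℤ →₀ ℂ) :=
  (Finsupp.domLCongr (Equiv.addRight n).symm).toLinearMap

/-- `a^⊥`: the subspace of all `v ∈ ℤ →₀ ℂ` such that `⟨a, v^{(n)}⟩ = 0` for all
`n ∈ ℤ`, where `⟨a, w⟩ = ∑ i, a i * w i`. -/
noncomputable def perp (a : ℤ → ℂ) : Submodule ℂ (ℤ →₀ ℂ) :=
  ⨅ n : ℤ, LinearMap.ker ((Finsupp.linearCombination ℂ a).comp (shiftVL n))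

/-- `ω(v) = r(v) - l(v)`, the difference between the maximum and the minimum of
the support of `v` (junk value `0` for `v = 0`). -/
noncomputable def omegaV (v : ℤ →₀ ℂ) : ℕ :=
  ((WithBot.unbotD 0 v.support.max) - (WithTop.untopD 0 v.support.min)).toNat
lemma shiftV_apply (v : ℤ →₀ ℂ) (n i : ℤ) : shiftV v n i = v (i + n) := rfl

lemma mem_support_shiftV (v : ℤ →₀ ℂ) (n i : ℤ) :
    i ∈ (shiftV v n).support ↔ i + n ∈ v.support := by
  simp [Finsupp.mem_support_iff, shiftV_apply]

lemma mem_perp_iff (a : ℤ → ℂ) (v : ℤ →₀ ℂ) :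
    v ∈ perp a ↔ ∀ n : ℤ, Finsupp.linearCombination ℂ a (shiftV v n) = 0 := by
  simp [perp, Submodule.mem_iInf, LinearMap.mem_ker]
  rfl

lemma shiftV_shiftV (v : ℤ →₀ ℂ) (n m : ℤ) : shiftV (shiftV v n) m = shiftV v (m + n) := by
  ext i; simp [shiftV_apply, add_assoc]

lemma shiftV_mem_perp {a : ℤ → ℂ} {v : ℤ →₀ ℂ} (hv : v ∈ perp a) (n : ℤ) :
    shiftV v n ∈ perp a := by
  rw [mem_perp_iff] at hv ⊢
  intro m
  rw [shiftV_shiftV]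
  exact hv (m + n)

lemma omegaV_cast {v : ℤ →₀ ℂ} (h : v.support.Nonempty) :
    (omegaV v : ℤ) = v.support.max' h - v.support.min' h := by
  rw [omegaV, ← Finset.coe_max' h, ← Finset.coe_min' h]
  simp only [WithBot.unbotD_coe, WithTop.untopD_coe]
  exact Int.toNat_of_nonneg (by
    have := Finset.min'_le v.support _ (v.support.max'_mem h)
    omega)


/-- If `a` is not generic, `v ∈ a^⊥` is nonzero with `ω(v)` minimal, and
`v' ∈ a^⊥` is nonzero with `ω(v') = ω(v)`, then `v'` is a nonzero scalar
multiple of some shift of `v`. -/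
theorem eq_smul_shift_of_omega_eq (a : ℤ → ℂ)
    (ha : ¬ LinearIndependent ℂ (fun n : ℤ => shiftFun a n))
    (v : ℤ →₀ ℂ) (hv : v ∈ perp a) (hv0 : v ≠ 0)
    (hmin : ∀ w ∈ perp a, w ≠ 0 → omegaV v ≤ omegaV w)
    (v' : ℤ →₀ ℂ) (hv' : v' ∈ perp a) (hv'0 : v' ≠ 0)
    (homega : omegaV v' = omegaV v) :
    ∃ (c : ℂ) (n : ℤ), c ≠ 0 ∧ v' = c • shiftV v n := by
  have hs : v.support.Nonempty := Finsupp.support_nonempty_iff.mpr hv0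
  have hs' : v'.support.Nonempty := Finsupp.support_nonempty_iff.mpr hv'0
  set lv := v.support.min' hs with hlv
  set rv := v.support.max' hs with hrv
  set lv' := v'.support.min' hs' with hlv'
  set rv' := v'.support.max' hs' with hrv'
  have hωv : (omegaV v : ℤ) = rv - lv := omegaV_cast hs
  have hωv' : (omegaV v' : ℤ) = rv' - lv' := omegaV_cast hs'
  have hdiff : rv' - lv' = rv - lv := by
    rw [← hωv, ← hωv', homega]
  set n := lv - lv' with hn
  have hvlv : v lv ≠ 0 := Finsupp.mem_support_iff.mp (v.support.min'_mem hs)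
  have hv'lv' : v' lv' ≠ 0 := Finsupp.mem_support_iff.mp (v'.support.min'_mem hs')
  set c := v' lv' / v lv with hc
  have hc0 : c ≠ 0 := div_ne_zero hv'lv' hvlv
  refine ⟨c, n, hc0, ?_⟩
  set w := v' - c • shiftV v n with hw
  have hwperp : w ∈ perp a := by
    exact Submodule.sub_mem _ hv' (Submodule.smul_mem _ _ (shiftV_mem_perp hv n))
  have hwlv' : w lv' = 0 := by
    simp only [hw, Finsupp.sub_apply, Finsupp.smul_apply, shiftV_apply, smul_eq_mul]
    have : lv' + n = lv := by omega
    rw [this, hc, div_mul_cancel₀ _ hvlv, sub_self]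
  have hwzero : w = 0 := by
    by_contra hw0
    have hws : w.support.Nonempty := Finsupp.support_nonempty_iff.mpr hw0
    have hsub : ∀ i ∈ w.support, lv' + 1 ≤ i ∧ i ≤ rv' := by
      intro i hi
      have hi0 : w i ≠ 0 := Finsupp.mem_support_iff.mp hi
      have hne : i ≠ lv' := fun h => hi0 (h ▸ hwlv')
      have hcases : v' i ≠ 0 ∨ v (i + n) ≠ 0 := by
        by_contra hcon
        push_neg at hcon
        apply hi0
        simp only [hw, Finsupp.sub_apply, Finsupp.smul_apply, shiftV_apply, smul_eq_mul,
          hcon.1, hcon.2, mul_zero, sub_zero]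
      have hbound : lv' ≤ i ∧ i ≤ rv' := by
        rcases hcases with h | h
        · have h1 := v'.support.min'_le _ (Finsupp.mem_support_iff.mpr h)
          have h2 := v'.support.le_max' _ (Finsupp.mem_support_iff.mpr h)
          exact ⟨h1, h2⟩
        · have h1 := v.support.min'_le _ (Finsupp.mem_support_iff.mpr h)
          have h2 := v.support.le_max' _ (Finsupp.mem_support_iff.mpr h)
          constructor <;> omega
      omega
    have h1 := hsub _ (w.support.min'_mem hws)
    have h2 := hsub _ (w.support.max'_mem hws)
    have hωw : (omegaV w : ℤ) = w.support.max' hws - w.support.min' hws := omegaV_cast hws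
    have hle := hmin w hwperp hw0
    have hvv' : (omegaV v : ℤ) = (omegaV v' : ℤ) := by rw [homega]
    omega
  have : v' = c • shiftV v n := by
    have := sub_eq_zero.mp (by rw [← hw]; exact hwzero)
    exact this
  exact this
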